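/- arXiv:1511.04314 — 6 statements merged into one kernel-verified Lean document; each statement's English description precedes it below -/
import Mathlib

section
/- For every exchange matrix s there exists an index i ∈ {1,…,d} such that s_{i,j} ≤ 1 for all j ∈ {1,…,d}. In particular, the set {i : ∑_j s_{i,j} < ∞} of indices with finite row sum is nonempty. -/
open MeasureTheory Filter Set Function
open scoped ENNReal

noncomputable section

/-- The product `x * y` of two elements of `[0,∞]` is defined unless `{x, y} = {0, ∞}`. -/
def DefinedProd (x y : ℝ≥0∞) : Prop := ¬(x = 0 ∧ y = ∞) ∧ ¬(x = ∞ ∧ y = 0)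

/-- An exchange matrix: a `d × d` matrix with entries in `[0,∞]` such that `s i i = 1` and
`s i j * s j k = s i k` whenever the product is defined. -/
structure IsExchangeMatrix {d : ℕ} (s : Fin d → Fin d → ℝ≥0∞) : Prop where
  diag : ∀ i, s i i = 1
  consistent : ∀ i j k, DefinedProd (s i j) (s j k) → s i j * s j k = s i k

/-- A value vector for an exchange matrix `s`: `s i j * v j = v i` whenever defined. -/
def IsValueVector {d : ℕ} (s : Fin d → Fin d → ℝ≥0∞) (v : Fin d → ℝ≥0∞) : Prop :=
  ∀ i j, DefinedProd (s i j) (v j) → s i j * v j = v i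

open Classical in
/-- The set of active indices of an exchange matrix: those whose row sum is finite. -/
def activeFinset {d : ℕ} (s : Fin d → Fin d → ℝ≥0∞) : Finset (Fin d) :=
  Finset.univ.filter fun i => ∑ j, s i j < ∞

/-- The market model of the paper: a right-continuous filtration `F` (with `F 0` trivial) on
`[0,T]`, and a right-continuous adapted process `S` of exchange matrices with deterministic
initial value `S0` all of whose rows are finite (no currency has devalued at time `0`). -/
structure MarketModel (d : ℕ) (Ω : Type*) [mΩ : MeasurableSpace Ω] (T : ℝ) where
  F : Filtration ℝ mΩ
  S : ℝ → Ω → Fin d → Fin d → ℝ≥0∞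
  S0 : Fin d → Fin d → ℝ≥0∞
  T_pos : 0 < T
  rc_F : ∀ t ∈ Set.Ico (0 : ℝ) T, (⨅ u ∈ Set.Ioi t, F u) ≤ F t
  trivial_F0 : ∀ A : Set Ω, MeasurableSet[F 0] A → A = ∅ ∨ A = Set.univ
  adapted_S : ∀ t ∈ Set.Icc (0 : ℝ) T, ∀ i j, Measurable[F t] fun ω => S t ω i j
  rc_S : ∀ ω i j, ∀ t ∈ Set.Ico (0 : ℝ) T,
    Tendsto (fun u => S u ω i j) (nhdsWithin t (Set.Ioi t)) (nhds (S t ω i j))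
  exchange_S : ∀ t ∈ Set.Icc (0 : ℝ) T, ∀ ω, IsExchangeMatrix fun i j => S t ω i j
  init_S : ∀ ω, S 0 ω = S0
  active_S0 : ∀ i, ∑ j, S0 i j < ∞

namespace MarketModel

variable {d : ℕ} {Ω : Type*} [mΩ : MeasurableSpace Ω] {T : ℝ}

/-- Basket-quoted price of the `i`-th currency. -/
def Sbar (M : MarketModel d Ω T) (i : Fin d) (t : ℝ) (ω : Ω) : ℝ≥0∞ :=
  (∑ j, M.S t ω i j)⁻¹

/-- The (random) set of active currencies at time `t`. -/
def active (M : MarketModel d Ω T) (t : ℝ) (ω : Ω) : Finset (Fin d) :=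
  activeFinset fun i j => M.S t ω i j

/-- The payoff of a claim `C` in terms of the basket:
`C̄ = (1/|A(T)|) ∑_{j ∈ A(T)} S̄_j(T) C_j`. -/
def Cbar (M : MarketModel d Ω T) (C : Ω → Fin d → ℝ≥0∞) (ω : Ω) : ℝ≥0∞ :=
  ((M.active T ω).card : ℝ≥0∞)⁻¹ * ∑ j ∈ M.active T ω, M.Sbar j T ω * C ω j

/-- A contingent claim: an `F(T)`-measurable value vector for `S(T)`. -/
def IsClaim (M : MarketModel d Ω T) (C : Ω → Fin d → ℝ≥0∞) : Prop :=
  (∀ i, Measurable fun ω => C ω i) ∧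
  ∀ ω, IsValueVector (fun i j => M.S T ω i j) (C ω)

end MarketModel

/-- A real-valued martingale on the time interval `[0, T]`. -/
def MartingaleOn {Ω : Type*} {mΩ : MeasurableSpace Ω} (F : Filtration ℝ mΩ)
    (Q : Measure Ω) (X : ℝ → Ω → ℝ) (T : ℝ) : Prop :=
  (∀ t ∈ Set.Icc (0 : ℝ) T, StronglyMeasurable[F t] (X t) ∧ Integrable (X t) Q) ∧
  ∀ r ∈ Set.Icc (0 : ℝ) T, ∀ t ∈ Set.Icc (0 : ℝ) T, r ≤ t → Q[X t|F r] =ᵐ[Q] X r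

/-- A real-valued supermartingale on the time interval `[0, T]`. -/
def SupermartingaleOn {Ω : Type*} {mΩ : MeasurableSpace Ω} (F : Filtration ℝ mΩ)
    (Q : Measure Ω) (X : ℝ → Ω → ℝ) (T : ℝ) : Prop :=
  (∀ t ∈ Set.Icc (0 : ℝ) T, StronglyMeasurable[F t] (X t) ∧ Integrable (X t) Q) ∧
  ∀ r ∈ Set.Icc (0 : ℝ) T, ∀ t ∈ Set.Icc (0 : ℝ) T, r ≤ t → Q[X t|F r] ≤ᵐ[Q] X r

/-- A local martingale on `[0, T]`: there is a nondecreasing sequence of stopping times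
with `Q(lim_n τ_n > T) = 1` such that each stopped process is a martingale on `[0, T]`. -/
def LocalMartingaleOn {Ω : Type*} {mΩ : MeasurableSpace Ω} (F : Filtration ℝ mΩ)
    (Q : Measure Ω) (X : ℝ → Ω → ℝ) (T : ℝ) : Prop :=
  ∃ τ : ℕ → Ω → ℝ,
    (∀ n, IsStoppingTime F (fun ω => ((τ n ω : ℝ) : WithTop ℝ))) ∧
    (∀ n ω, τ n ω ≤ τ (n + 1) ω) ∧
    (∀ᵐ ω ∂Q, ∃ n, T < τ n ω) ∧
    ∀ n, MartingaleOn F Q (fun t ω => X (min t (τ n ω)) ω) T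

/-- A numéraire-consistent family of probability measures:
`E^{Q_i}[S_{i,j}(t) 1_A] = S_{i,j}(0) Q_j(A ∩ {S_{j,i}(t) > 0})`. -/
def NumeraireConsistent {d : ℕ} {Ω : Type*} [mΩ : MeasurableSpace Ω] {T : ℝ}
    (M : MarketModel d Ω T) (Q : Fin d → Measure Ω) : Prop :=
  (∀ i, IsProbabilityMeasure (Q i)) ∧
  ∀ i j : Fin d, ∀ t ∈ Set.Icc (0 : ℝ) T, ∀ A : Set Ω, MeasurableSet[M.F t] A →
    ∫⁻ ω in A, M.S t ω i j ∂(Q i) = M.S0 i j * Q j (A ∩ {ω | 0 < M.S t ω j i})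

/-- A valuation measure with respect to the basket: the basket-quoted prices form a
`Q̄`-martingale on `[0, T]`. -/
def IsValuationMeasure {d : ℕ} {Ω : Type*} [mΩ : MeasurableSpace Ω] {T : ℝ}
    (M : MarketModel d Ω T) (Qb : Measure Ω) : Prop :=
  IsProbabilityMeasure Qb ∧
  ∀ i, MartingaleOn M.F Qb (fun t ω => (M.Sbar i t ω).toReal) T

/-- The aggregation valuation formula
`E^{Q̄}[C̄ | F(r)] = ∑_{j ∈ A(r)} S̄_j(r) E^{Q_j}[C_j / |A(T)| | F(r)]`. -/
def AggregationFormula {d : ℕ} {Ω : Type*} [mΩ : MeasurableSpace Ω] {T : ℝ}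
    (M : MarketModel d Ω T) (Qb : Measure Ω) (Q : Fin d → Measure Ω)
    (C : Ω → Fin d → ℝ≥0∞) (r : ℝ) : Prop :=
  Qb[fun ω => (M.Cbar C ω).toReal|M.F r] =ᵐ[Qb] fun ω =>
    ∑ j, Set.indicator {ω' | ∑ k, M.S r ω' j k < ∞}
      (fun ω' => (M.Sbar j r ω').toReal *
        ((Q j)[fun ω'' => (C ω'' j / ((M.active T ω'').card : ℝ≥0∞)).toReal|M.F r]) ω') ω

/-- An `[0,∞]`-valued process jumps to zero on `[0, T]`: it is zero at some time `t ∈ [0, T]`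
while its left limit at `t` is strictly positive. -/
def JumpsToZeroOn (X : ℝ → ℝ≥0∞) (T : ℝ) : Prop :=
  ∃ t ∈ Set.Icc (0 : ℝ) T, X t = 0 ∧ 0 < Function.leftLim X t

/-- A `[0,∞]`-valued stopping time. -/
def IsStoppingTimeE {Ω : Type*} {mΩ : MeasurableSpace Ω} (F : Filtration ℝ mΩ)
    (τ : Ω → ℝ≥0∞) : Prop :=
  ∀ t : ℝ, 0 ≤ t → MeasurableSet[F t] {ω | τ ω ≤ ENNReal.ofReal t}

/-- Membership in the σ-algebra `F(τ)` for a `[0,∞]`-valued stopping time `τ`. -/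
def MeasurableSetAtE {Ω : Type*} {mΩ : MeasurableSpace Ω} (F : Filtration ℝ mΩ)
    (τ : Ω → ℝ≥0∞) (A : Set Ω) : Prop :=
  MeasurableSet A ∧ ∀ t : ℝ, 0 ≤ t → MeasurableSet[F t] (A ∩ {ω | τ ω ≤ ENNReal.ofReal t})

/-- A predictable time: a stopping time announced by a nondecreasing sequence of stopping
times converging to it and strictly smaller than it on its finiteness set. -/
def IsPredictableTimeE {Ω : Type*} {mΩ : MeasurableSpace Ω} (F : Filtration ℝ mΩ)
    (σ : Ω → ℝ≥0∞) : Prop :=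
  IsStoppingTimeE F σ ∧
  ∃ a : ℕ → Ω → ℝ≥0∞,
    (∀ n, IsStoppingTimeE F (a n)) ∧
    (∀ n ω, a n ω ≤ a (n + 1) ω) ∧
    (∀ ω, (⨆ n, a n ω) = σ ω) ∧
    ∀ n ω, 0 < σ ω → σ ω < ∞ → a n ω < σ ω

/-- No Obvious Devaluations: for every currency `i` and stopping time `τ`,
`P(i ∈ A(T) | F(τ)) > 0` almost surely on `{τ < ∞} ∩ {i ∈ A(τ)}`, formulated via
`F(τ)`-measurable subsets of that event. -/
def NOD {d : ℕ} {Ω : Type*} [mΩ : MeasurableSpace Ω] {T : ℝ}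
    (M : MarketModel d Ω T) (P : Measure Ω) : Prop :=
  ∀ i : Fin d, ∀ τ : Ω → ℝ≥0∞, IsStoppingTimeE M.F τ →
    ∀ A : Set Ω, MeasurableSetAtE M.F τ A →
      (∀ ω ∈ A, τ ω < ∞ ∧ ∑ j, M.S (τ ω).toReal ω i j < ∞) →
      0 < P A → 0 < P (A ∩ {ω | ∑ j, M.S T ω i j < ∞})

/-- For every exchange matrix `s` there exists an index `i` with `s i j ≤ 1`
for all `j`; in particular the set of indices with finite row sum is nonempty. -/
theorem exchangeMatrix_exists_strong_currency {d : ℕ} (hd : 0 < d)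
    (s : Fin d → Fin d → ℝ≥0∞) (hs : IsExchangeMatrix s) :
    (∃ i, ∀ j, s i j ≤ 1) ∧ {i : Fin d | ∑ j, s i j < ∞}.Nonempty := by
  have total : ∀ i j, s i j ≤ 1 ∨ s j i ≤ 1 := by
    intro i j
    by_cases h : s i j ≤ 1
    · exact Or.inl h
    · push_neg at h
      right
      by_cases hz : s j i = 0
      · simp [hz]
      · have hdef : DefinedProd (s i j) (s j i) := by
          constructor
          · rintro ⟨h0, -⟩; exact absurd h0.le (not_le.mpr (lt_trans zero_lt_one h))
          · rintro ⟨-, h0⟩; exact hz h0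
        have hmul : s i j * s j i = 1 := by
          rw [hs.consistent i j i hdef, hs.diag]
        by_contra hgt
        push_neg at hgt
        have : (1 : ℝ≥0∞) < s i j * s j i :=
          one_lt_mul h.le hgt
        rw [hmul] at this
        exact lt_irrefl _ this
  have trans : ∀ i j k, s i j ≤ 1 → s j k ≤ 1 → s i k ≤ 1 := by
    intro i j k hij hjk
    have hdef : DefinedProd (s i j) (s j k) := by
      constructor
      · rintro ⟨-, h1⟩; rw [h1] at hjk; exact absurd hjk (by simp)
      · rintro ⟨h1, -⟩; rw [h1] at hij; exact absurd hij (by simp)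
    calc s i k = s i j * s j k := (hs.consistent i j k hdef).symm
    _ ≤ 1 * 1 := mul_le_mul' hij hjk
    _ = 1 := by norm_num
  have key : ∀ t : Finset (Fin d), t.Nonempty → ∃ i ∈ t, ∀ j ∈ t, s i j ≤ 1 := by
    intro t
    induction t using Finset.induction_on with
    | empty => intro h; exact absurd h (by simp)
    | @insert a t ha ih =>
      intro _
      rcases t.eq_empty_or_nonempty with rfl | hne
      · exact ⟨a, by simp, by simp [hs.diag a]⟩
      · obtain ⟨i, hit, hi⟩ := ih hne
        rcases total i a with h | h
        · exact ⟨i, Finset.mem_insert_of_mem hit, by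
            intro j hj
            rcases Finset.mem_insert.mp hj with rfl | hj
            · exact h
            · exact hi j hj⟩
        · refine ⟨a, Finset.mem_insert_self a t, ?_⟩
          intro j hj
          rcases Finset.mem_insert.mp hj with rfl | hj
          · exact le_of_eq (hs.diag j)
          · exact trans a i j h (hi j hj)
  obtain ⟨i, -, hi⟩ := key Finset.univ (Finset.univ_nonempty_iff.mpr ⟨⟨0, hd⟩⟩)
  have hi' : ∀ j, s i j ≤ 1 := fun j => hi j (Finset.mem_univ j)
  refine ⟨⟨i, hi'⟩, ⟨i, ?_⟩⟩
  have : ∑ j, s i j ≤ ∑ _j : Fin d, 1 := Finset.sum_le_sum fun j _ => hi' j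
  simp only [Set.mem_setOf_eq]
  calc ∑ j, s i j ≤ ∑ _j : Fin d, 1 := this
  _ = d := by simp
  _ < ∞ := by simp [ENNReal.natCast_lt_top]
end
end

section
/- Let s be an exchange matrix and define the basket-quoted prices s̄_i = 1/∑_j s_{i,j} ∈ [0,1] for each i. Then ∑_j s̄_j = 1. -/
open MeasureTheory Filter Set Function
open scoped ENNReal

noncomputable section

/-- For an exchange matrix `s` with basket-quoted prices
`s̄ i = (∑ j, s i j)⁻¹`, one has `∑ j, s̄ j = 1`. -/
theorem exchangeMatrix_sum_basket_prices_eq_one {d : ℕ} (hd : 0 < d)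
    (s : Fin d → Fin d → ℝ≥0∞) (hs : IsExchangeMatrix s)
    (sbar : Fin d → ℝ≥0∞) (hsbar : ∀ i, sbar i = (∑ j, s i j)⁻¹) :
    ∑ j, sbar j = 1 := by
  classical
  have L1 : ∀ i j, s i j = ∞ → s j i = 0 := by
    intro i j hij
    by_contra h
    have hdp : DefinedProd (s j i) (s i j) := by
      constructor
      · rintro ⟨h0, -⟩; exact h h0
      · rintro ⟨-, h0⟩; rw [hij] at h0; exact ENNReal.top_ne_zero h0
    have hc := hs.consistent j i j hdp
    rw [hs.diag j, hij, ENNReal.mul_top h] at hc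
    exact ENNReal.top_ne_one hc
  have L2 : ∀ i j, s j i = 0 → s i j = ∞ := by
    intro i j hji
    by_contra h
    have hdp : DefinedProd (s i j) (s j i) := by
      constructor
      · rintro ⟨-, h0⟩; rw [hji] at h0; exact ENNReal.zero_ne_top h0
      · rintro ⟨h0, -⟩; exact h h0
    have hc := hs.consistent i j i hdp
    rw [hs.diag i, hji, mul_zero] at hc
    exact zero_ne_one hc
  have L3 : ∀ i j k, s i j = ∞ → s j k = ∞ → s i k = ∞ := by
    intro i j k hij hjk
    by_contra h
    have hkj : s k j = 0 := L1 j k hjk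
    have hdp : DefinedProd (s i k) (s k j) := by
      constructor
      · rintro ⟨-, h0⟩; rw [hkj] at h0; exact ENNReal.zero_ne_top h0
      · rintro ⟨h0, -⟩; exact h h0
    have hc := hs.consistent i k j hdp
    rw [hkj, mul_zero] at hc
    rw [← hc] at hij
    exact ENNReal.zero_ne_top hij
  obtain ⟨i₀, -, hmin⟩ := Finset.exists_min_image Finset.univ
    (fun i => (Finset.univ.filter (fun j => s i j = ∞)).card) ⟨⟨0, hd⟩, Finset.mem_univ _⟩
  have hi₀ : ∀ j, s i₀ j ≠ ∞ := by
    by_contra h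
    push_neg at h
    obtain ⟨j, hj⟩ := h
    have hlt : (Finset.univ.filter (fun k => s j k = ∞)).card <
        (Finset.univ.filter (fun k => s i₀ k = ∞)).card := by
      apply Finset.card_lt_card
      constructor
      · intro k hk
        simp only [Finset.mem_filter, Finset.mem_univ, true_and] at hk ⊢
        exact L3 _ _ _ hj hk
      · intro hsub
        have hjmem : j ∈ Finset.univ.filter (fun k => s i₀ k = ∞) := by simp [hj]
        have := hsub hjmem
        simp [hs.diag j] at this
    exact absurd (hmin j (Finset.mem_univ j)) (not_le.mpr hlt)
  have hsum : ∑ k, s i₀ k ≠ ∞ := ENNReal.sum_ne_top.mpr fun k _ => hi₀ k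
  have hsum0 : ∑ k, s i₀ k ≠ 0 := by
    intro h
    have h0 : s i₀ i₀ = 0 := Finset.sum_eq_zero_iff.mp h i₀ (Finset.mem_univ _)
    rw [hs.diag] at h0
    exact one_ne_zero h0
  have key : ∀ j, sbar j = s i₀ j * (∑ k, s i₀ k)⁻¹ := by
    intro j
    rw [hsbar]
    by_cases h0 : s i₀ j = 0
    · have hji : s j i₀ = ∞ := L2 j i₀ h0
      have hsj : ∑ k, s j k = ∞ := by
        rw [ENNReal.sum_eq_top]
        exact ⟨i₀, Finset.mem_univ _, hji⟩
      rw [hsj, h0, ENNReal.inv_top, zero_mul]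
    · have hfin := hi₀ j
      have hdp : DefinedProd (s i₀ j) (s j i₀) := ⟨fun h => h0 h.1, fun h => hfin h.1⟩
      have h1 : s i₀ j * s j i₀ = 1 := by rw [hs.consistent i₀ j i₀ hdp, hs.diag]
      have hji0 : s j i₀ ≠ 0 := by
        intro h
        rw [h, mul_zero] at h1
        exact zero_ne_one h1
      have hjit : s j i₀ ≠ ∞ := by
        intro h
        rw [h, ENNReal.mul_top h0] at h1
        exact ENNReal.top_ne_one h1
      have hrow : ∀ k, s j k = s j i₀ * s i₀ k := by
        intro k
        refine (hs.consistent j i₀ k ⟨?_, ?_⟩).symm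
        · rintro ⟨h, -⟩; exact hji0 h
        · rintro ⟨h, -⟩; exact hjit h
      have hsj : ∑ k, s j k = s j i₀ * ∑ k, s i₀ k := by
        rw [Finset.mul_sum]
        exact Finset.sum_congr rfl fun k _ => hrow k
      rw [hsj, ENNReal.mul_inv (Or.inl hji0) (Or.inl hjit),
        ← ENNReal.eq_inv_of_mul_eq_one_left h1]
  calc ∑ j, sbar j = ∑ j, s i₀ j * (∑ k, s i₀ k)⁻¹ :=
        Finset.sum_congr rfl fun j _ => key j
    _ = (∑ j, s i₀ j) * (∑ k, s i₀ k)⁻¹ := (Finset.sum_mul _ _ _).symm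
    _ = 1 := ENNReal.mul_inv_cancel hsum0 hsum
end
end

section
/- Let s be an exchange matrix, let A = {i : ∑_j s_{i,j} < ∞} be its set of active indices, and let s̄_i = 1/∑_j s_{i,j}. Fix i and let v = (s_{j,i})_j be the value vector corresponding to one unit of the i-th currency. Then v is a value vector for s, and its basket payoff (1/|A|)·∑_{j∈A} s̄_j·v_j equals s̄_i. -/
open MeasureTheory Filter Set Function
open scoped ENNReal

noncomputable section

lemma rowSum_eq_of_ne_zero {d : ℕ} (s : Fin d → Fin d → ℝ≥0∞) (hs : IsExchangeMatrix s)
    {i j : Fin d} (hj : ∑ k, s j k < ∞) (hji : s j i ≠ 0) :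
    ∑ k, s i k = (s j i)⁻¹ * ∑ k, s j k := by
  have hjk : ∀ k, s j k ≠ ∞ := fun k =>
    (lt_of_le_of_lt (Finset.single_le_sum (fun _ _ => zero_le) (Finset.mem_univ k)) hj).ne
  have hjifin : s j i ≠ ∞ := hjk i
  rw [Finset.mul_sum]
  refine Finset.sum_congr rfl fun k _ => ?_
  have hdp : DefinedProd (s j i) (s i k) := ⟨fun h => hji h.1, fun h => hjifin h.1⟩
  have hcons := hs.consistent j i k hdp
  calc s i k = (s j i)⁻¹ * (s j i * s i k) := by
        rw [← mul_assoc, ENNReal.inv_mul_cancel hji hjifin, one_mul]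
    _ = (s j i)⁻¹ * s j k := by rw [hcons]

/-- The vector `v = (s j i)_j` of values of one unit of the `i`-th currency is a
value vector for `s`, and its basket payoff `(1/|A|) ∑_{j ∈ A} s̄ j * v j` equals `s̄ i`,
where `A` is the set of active indices and `s̄ j = (∑ k, s j k)⁻¹`. -/
theorem valueVector_unit_currency_basket_payoff {d : ℕ} (hd : 0 < d)
    (s : Fin d → Fin d → ℝ≥0∞) (hs : IsExchangeMatrix s) (i : Fin d) :
    IsValueVector s (fun j => s j i) ∧
    ((activeFinset s).card : ℝ≥0∞)⁻¹ * ∑ j ∈ activeFinset s, (∑ k, s j k)⁻¹ * s j i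
      = (∑ k, s i k)⁻¹ := by
  constructor
  · intro j k hdp
    exact hs.consistent j k i hdp
  · by_cases hi : ∑ k, s i k < ∞
    · have hiA : i ∈ activeFinset s := by
        simp only [activeFinset, Finset.mem_filter, Finset.mem_univ, true_and]; exact hi
      have hterm : ∀ j ∈ activeFinset s, (∑ k, s j k)⁻¹ * s j i = (∑ k, s i k)⁻¹ := by
        intro j hjA
        have hj : ∑ k, s j k < ∞ := by simpa [activeFinset] using hjA
        have hjk : ∀ k, s j k ≠ ∞ := fun k =>
          (lt_of_le_of_lt (Finset.single_le_sum (fun _ _ => zero_le) (Finset.mem_univ k)) hj).ne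
        have hik : ∀ k, s i k ≠ ∞ := fun k =>
          (lt_of_le_of_lt (Finset.single_le_sum (fun _ _ => zero_le) (Finset.mem_univ k)) hi).ne
        have hji0 : s j i ≠ 0 := by
          intro h0
          have hdp : DefinedProd (s j i) (s i j) :=
            ⟨fun h => hik j h.2, fun h => hjk i h.1⟩
          have := hs.consistent j i j hdp
          rw [hs.diag, h0, zero_mul] at this
          exact zero_ne_one this
        have hrow := rowSum_eq_of_ne_zero s hs hj hji0
        have hrowsum0 : (∑ k, s j k) ≠ 0 := by
          intro h0
          have : s j j = 0 :=
            le_antisymm (h0 ▸ Finset.single_le_sum (f := fun k => s j k)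
              (fun _ _ => zero_le) (Finset.mem_univ j)) (zero_le)
          rw [hs.diag] at this; exact one_ne_zero this
        rw [hrow, ENNReal.mul_inv (Or.inl (by simp [hjk i])) (Or.inr hrowsum0),
          inv_inv, mul_comm]
      rw [Finset.sum_congr rfl hterm, Finset.sum_const, nsmul_eq_mul, ← mul_assoc,
        ENNReal.inv_mul_cancel (by simpa using Finset.card_ne_zero_of_mem hiA)
          (ENNReal.natCast_ne_top _), one_mul]
    · have hterm : ∀ j ∈ activeFinset s, (∑ k, s j k)⁻¹ * s j i = 0 := by
        intro j hjA
        have hj : ∑ k, s j k < ∞ := by simpa [activeFinset] using hjA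
        have hji0 : s j i = 0 := by
          by_contra hji
          exact hi ((rowSum_eq_of_ne_zero s hs hj hji) ▸
            ENNReal.mul_lt_top (ENNReal.inv_lt_top.2 (pos_iff_ne_zero.2 hji)) hj)
        rw [hji0, mul_zero]
      rw [Finset.sum_congr rfl hterm, Finset.sum_const_zero, mul_zero,
        ENNReal.inv_eq_zero.2 (by simpa using not_lt.1 hi)]
end
end

section
/- Suppose (Q_i)_{i=1}^d is a numéraire-consistent family of probability measures. Then for each i: the process S_i = (S_{i,j})_j (the i-th row of S) is a Q_i-supermartingale (in particular each S_{i,j} is real-valued and integrable under Q_i), and Q_i(i ∈ A(t) for all t ∈ [0,T]) = 1, i.e. under Q_i the i-th currency almost surely never devalues against any other currency. -/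
open MeasureTheory Filter Set Function
open scoped ENNReal

noncomputable section

section AuxLemmas

open MeasureTheory

lemma exch_inv {d : ℕ} {s : Fin d → Fin d → ℝ≥0∞} (hs : IsExchangeMatrix s) (a b : Fin d) :
    s b a = (s a b)⁻¹ := by
  rcases eq_or_ne (s a b) 0 with h0 | h0
  · rw [h0, ENNReal.inv_zero]
    by_contra hne
    have hd : DefinedProd (s a b) (s b a) := by
      constructor
      · rintro ⟨-, h⟩; exact hne h
      · rintro ⟨h, -⟩; rw [h0] at h; exact ENNReal.zero_ne_top h
    have h1 := hs.consistent a b a hd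
    rw [h0, zero_mul, hs.diag] at h1
    exact zero_ne_one h1
  rcases eq_or_ne (s a b) ∞ with htop | htop
  · rw [htop, ENNReal.inv_top]
    by_contra hne
    have hd : DefinedProd (s a b) (s b a) := by
      constructor
      · rintro ⟨h, -⟩; exact h0 h
      · rintro ⟨-, h⟩; exact hne h
    have h1 := hs.consistent a b a hd
    rw [htop, ENNReal.top_mul hne, hs.diag] at h1
    exact ENNReal.top_ne_one h1
  · have hd : DefinedProd (s a b) (s b a) := by
      constructor
      · rintro ⟨h, -⟩; exact h0 h
      · rintro ⟨h, -⟩; exact htop h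
    have h1 : s a b * s b a = 1 := by rw [hs.consistent a b a hd, hs.diag]
    calc s b a = (s a b)⁻¹ * (s a b * s b a) := by
          rw [← mul_assoc, ENNReal.inv_mul_cancel h0 htop, one_mul]
      _ = (s a b)⁻¹ := by rw [h1, mul_one]

end AuxLemmas

/-- Proposition, part (a), first half: for a numéraire-consistent family
`(Q_i)`, each row `S_i` is a `Q_i`-supermartingale (in particular real-valued and integrable
under `Q_i`), and `Q_i`-almost surely the `i`-th currency never devalues on `[0, T]`. -/
theorem numeraireConsistent_supermartingale {d : ℕ} {Ω : Type*} [MeasurableSpace Ω] {T : ℝ}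
    (hd : 0 < d) (M : MarketModel d Ω T) (Q : Fin d → Measure Ω)
    (hQ : NumeraireConsistent M Q) (i : Fin d) :
    (∀ j, SupermartingaleOn M.F (Q i) (fun t ω => (M.S t ω i j).toReal) T) ∧
    (∀ t ∈ Set.Icc (0 : ℝ) T, ∀ j,
      (∀ᵐ ω ∂(Q i), M.S t ω i j ≠ ∞) ∧ ∫⁻ ω, M.S t ω i j ∂(Q i) < ∞) ∧
    Q i {ω | ∀ t ∈ Set.Icc (0 : ℝ) T, ∑ j, M.S t ω i j < ∞} = 1 := by
  obtain ⟨hprob, hcons⟩ := hQ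
  haveI hPi : IsProbabilityMeasure (Q i) := hprob i
  have hT0 : (0 : ℝ) ∈ Set.Icc (0 : ℝ) T := ⟨le_rfl, M.T_pos.le⟩
  have hTT : T ∈ Set.Icc (0 : ℝ) T := ⟨M.T_pos.le, le_rfl⟩
  have hΩ : Nonempty Ω := by
    by_contra h
    rw [not_nonempty_iff] at h
    have h1 : Q i Set.univ = 1 := measure_univ
    rw [Set.univ_eq_empty_iff.mpr h, measure_empty] at h1
    exact zero_ne_one h1
  obtain ⟨ω0⟩ := hΩ
  have hS0exch : IsExchangeMatrix M.S0 := by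
    have h := M.exchange_S 0 hT0 ω0
    rw [M.init_S ω0] at h
    exact h
  have hS0lt : ∀ a b, M.S0 a b < ∞ := fun a b =>
    lt_of_le_of_lt (Finset.single_le_sum (f := fun c => M.S0 a c)
      (fun _ _ => zero_le) (Finset.mem_univ b)) (M.active_S0 a)
  have hS0pos : ∀ a b, M.S0 a b ≠ 0 := by
    intro a b h0
    have h := exch_inv hS0exch a b
    rw [h0, ENNReal.inv_zero] at h
    exact (hS0lt b a).ne h
  have hmeas : ∀ t ∈ Set.Icc (0 : ℝ) T, ∀ a b, Measurable fun ω => M.S t ω a b :=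
    fun t ht a b => (M.adapted_S t ht a b).mono (M.F.le t) le_rfl
  have hlint : ∀ t ∈ Set.Icc (0 : ℝ) T, ∀ b, ∫⁻ ω, M.S t ω i b ∂(Q i) ≤ M.S0 i b := by
    intro t ht b
    haveI := hprob b
    have h := hcons i b t ht Set.univ MeasurableSet.univ
    rw [Measure.restrict_univ] at h
    rw [h]
    calc M.S0 i b * Q b (Set.univ ∩ {ω | 0 < M.S t ω b i}) ≤ M.S0 i b * 1 :=
          mul_le_mul_right prob_le_one _
      _ = M.S0 i b := mul_one _
  have hlt : ∀ t ∈ Set.Icc (0 : ℝ) T, ∀ b, ∫⁻ ω, M.S t ω i b ∂(Q i) < ∞ :=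
    fun t ht b => lt_of_le_of_lt (hlint t ht b) (hS0lt i b)
  have hae : ∀ t ∈ Set.Icc (0 : ℝ) T, ∀ b, ∀ᵐ ω ∂(Q i), M.S t ω i b ≠ ∞ :=
    fun t ht b => (ae_lt_top (hmeas t ht i b) (hlt t ht b).ne).mono fun ω h => h.ne
  -- set-integral monotonicity in time
  have hmono : ∀ b : Fin d, ∀ r ∈ Set.Icc (0 : ℝ) T, ∀ t ∈ Set.Icc (0 : ℝ) T, r ≤ t →
      ∀ A : Set Ω, MeasurableSet[M.F r] A →
      ∫⁻ ω in A, M.S t ω i b ∂(Q i) ≤ ∫⁻ ω in A, M.S r ω i b ∂(Q i) := by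
    intro b r hr t ht hrt A hA
    haveI := hprob b
    set B : Set Ω := A ∩ {ω | M.S r ω b i = 0} with hBdef
    have hBr : MeasurableSet[M.F r] B :=
      hA.inter ((M.adapted_S r hr b i) (measurableSet_singleton 0))
    have hBe : B ∩ {ω | 0 < M.S r ω b i} = ∅ := by
      ext ω
      simp only [hBdef, Set.mem_inter_iff, Set.mem_setOf_eq, Set.mem_empty_iff_false, iff_false]
      rintro ⟨⟨-, h0⟩, hpos⟩
      exact hpos.ne' h0
    have hinf : ∀ ω ∈ B, M.S r ω i b = ∞ := by
      intro ω hω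
      have hi := exch_inv (M.exchange_S r hr ω) i b
      have h2 : M.S r ω b i = 0 := hω.2
      rw [h2] at hi
      exact ENNReal.inv_eq_zero.mp hi.symm
    have hB0 : Q i B = 0 := by
      have h := hcons i b r hr B hBr
      rw [hBe, measure_empty, mul_zero] at h
      have hle : (∞ : ℝ≥0∞) * Q i B ≤ ∫⁻ ω in B, M.S r ω i b ∂(Q i) := by
        rw [← setLIntegral_const B ∞]
        exact setLIntegral_mono (hmeas r hr i b) fun ω hω => (hinf ω hω).ge
      rw [h] at hle
      rcases mul_eq_zero.mp (le_antisymm hle zero_le) with h' | h'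
      · exact absurd h' ENNReal.top_ne_zero
      · exact h'
    have hBt : Q b (B ∩ {ω | 0 < M.S t ω b i}) = 0 := by
      have h := hcons i b t ht B (M.F.mono hrt _ hBr)
      rw [setLIntegral_measure_zero B _ hB0] at h
      rcases mul_eq_zero.mp h.symm with h' | h'
      · exact absurd h' (hS0pos i b)
      · exact h'
    have hsub : A ∩ {ω | 0 < M.S t ω b i} ⊆
        (A ∩ {ω | 0 < M.S r ω b i}) ∪ (B ∩ {ω | 0 < M.S t ω b i}) := by
      rintro ω ⟨hωA, hωt⟩
      rcases eq_or_ne (M.S r ω b i) 0 with h0 | h0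
      · exact Or.inr ⟨⟨hωA, h0⟩, hωt⟩
      · exact Or.inl ⟨hωA, pos_iff_ne_zero.mpr h0⟩
    calc ∫⁻ ω in A, M.S t ω i b ∂(Q i)
        = M.S0 i b * Q b (A ∩ {ω | 0 < M.S t ω b i}) := hcons i b t ht A (M.F.mono hrt _ hA)
      _ ≤ M.S0 i b * Q b (A ∩ {ω | 0 < M.S r ω b i}) := by
          refine mul_le_mul_right ?_ _
          calc Q b (A ∩ {ω | 0 < M.S t ω b i})
              ≤ Q b ((A ∩ {ω | 0 < M.S r ω b i}) ∪ (B ∩ {ω | 0 < M.S t ω b i})) :=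
                measure_mono hsub
            _ ≤ Q b (A ∩ {ω | 0 < M.S r ω b i}) + Q b (B ∩ {ω | 0 < M.S t ω b i}) :=
                measure_union_le _ _
            _ = Q b (A ∩ {ω | 0 < M.S r ω b i}) := by rw [hBt, add_zero]
      _ = ∫⁻ ω in A, M.S r ω i b ∂(Q i) := (hcons i b r hr A hA).symm
  -- supermartingale property
  have hsm : ∀ j, SupermartingaleOn M.F (Q i) (fun t ω => (M.S t ω i j).toReal) T := by
    intro b
    constructor
    · intro t ht
      refine ⟨(Measurable.ennreal_toReal (M.adapted_S t ht i b)).stronglyMeasurable, ?_⟩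
      exact integrable_toReal_of_lintegral_ne_top (hmeas t ht i b).aemeasurable (hlt t ht b).ne
    · intro r hr t ht hrt
      have hm := M.F.le r
      have hXint : Integrable (fun ω => (M.S t ω i b).toReal) (Q i) :=
        integrable_toReal_of_lintegral_ne_top (hmeas t ht i b).aemeasurable (hlt t ht b).ne
      have hYint : Integrable (fun ω => (M.S r ω i b).toReal) (Q i) :=
        integrable_toReal_of_lintegral_ne_top (hmeas r hr i b).aemeasurable (hlt r hr b).ne
      have hYsm : StronglyMeasurable[M.F r] fun ω => (M.S r ω i b).toReal :=
        (Measurable.ennreal_toReal (M.adapted_S r hr i b)).stronglyMeasurable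
      have hset : ∀ s : Set Ω, MeasurableSet[M.F r] s →
          ∫ ω in s, ((Q i)[fun ω' => (M.S t ω' i b).toReal|M.F r]) ω ∂(Q i) ≤
            ∫ ω in s, (M.S r ω i b).toReal ∂(Q i) := by
        intro s hs
        rw [setIntegral_condExp hm hXint hs]
        have h1 : ∫ ω in s, (M.S t ω i b).toReal ∂(Q i) =
            (∫⁻ ω in s, M.S t ω i b ∂(Q i)).toReal :=
          integral_toReal ((hmeas t ht i b).aemeasurable.restrict)
            (ae_restrict_of_ae (ae_lt_top (hmeas t ht i b) (hlt t ht b).ne))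
        have h2 : ∫ ω in s, (M.S r ω i b).toReal ∂(Q i) =
            (∫⁻ ω in s, M.S r ω i b ∂(Q i)).toReal :=
          integral_toReal ((hmeas r hr i b).aemeasurable.restrict)
            (ae_restrict_of_ae (ae_lt_top (hmeas r hr i b) (hlt r hr b).ne))
        rw [h1, h2]
        apply ENNReal.toReal_mono
        · exact (lt_of_le_of_lt (lintegral_mono' Measure.restrict_le_self le_rfl)
            (hlt r hr b)).ne
        · exact hmono b r hr t ht hrt s hs
      have htrim : ((Q i)[fun ω' => (M.S t ω' i b).toReal|M.F r]) ≤ᵐ[(Q i).trim hm]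
          fun ω => (M.S r ω i b).toReal := by
        apply ae_le_of_forall_setIntegral_le
          (integrable_condExp.trim hm stronglyMeasurable_condExp) (hYint.trim hm hYsm)
        intro s hs _
        rw [← setIntegral_trim hm stronglyMeasurable_condExp hs, ← setIntegral_trim hm hYsm hs]
        exact hset s hs
      exact ae_le_of_ae_le_trim htrim
  -- maximal inequality over finite time sets
  classical
  have hfin : ∀ b : Fin d, ∀ G : Finset ℝ, (∀ s ∈ G, s ∈ Set.Icc (0 : ℝ) T) → ∀ c : ℝ≥0∞,
      c * Q i {ω | ∃ s ∈ G, c ≤ M.S s ω i b} ≤ M.S0 i b := by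
    intro b G hG c
    haveI := hprob b
    set A : ℝ → Set Ω :=
      fun s => {ω | c ≤ M.S s ω i b ∧ ∀ u ∈ G, u < s → M.S u ω i b < c} with hAdef
    have hAmeas : ∀ s ∈ G, MeasurableSet[M.F s] (A s) := by
      intro s hs
      have h1 : MeasurableSet[M.F s] {ω | c ≤ M.S s ω i b} :=
        (M.adapted_S s (hG s hs) i b) measurableSet_Ici
      have h2 : MeasurableSet[M.F s] (⋂ u ∈ G, ⋂ _ : u < s, {ω | M.S u ω i b < c}) := by
        refine MeasurableSet.biInter G.countable_toSet fun u hu => ?_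
        refine MeasurableSet.iInter fun hus => ?_
        exact M.F.mono hus.le _ ((M.adapted_S u (hG u hu) i b) measurableSet_Iio)
      have heq : A s = {ω | c ≤ M.S s ω i b} ∩ ⋂ u ∈ G, ⋂ _ : u < s, {ω | M.S u ω i b < c} := by
        ext ω
        simp only [hAdef, Set.mem_setOf_eq, Set.mem_inter_iff, Set.mem_iInter]
      rw [heq]
      exact h1.inter h2
    have hAdisj : (↑G : Set ℝ).PairwiseDisjoint A := by
      intro s hs u hu hsu
      rcases lt_or_gt_of_ne hsu with h | h
      · exact Set.disjoint_left.mpr fun ω hωs hωu =>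
          absurd hωs.1 (not_le.mpr (hωu.2 s (Finset.mem_coe.mp hs) h))
      · exact Set.disjoint_left.mpr fun ω hωs hωu =>
          absurd hωu.1 (not_le.mpr (hωs.2 u (Finset.mem_coe.mp hu) h))
    have hcover : {ω | ∃ s ∈ G, c ≤ M.S s ω i b} = ⋃ s ∈ G, A s := by
      ext ω
      simp only [Set.mem_setOf_eq, Set.mem_iUnion, exists_prop]
      constructor
      · rintro ⟨s, hs, hc⟩
        obtain ⟨u, hu, hmin⟩ := (G.filter fun v => c ≤ M.S v ω i b).exists_min_image id
          ⟨s, Finset.mem_filter.mpr ⟨hs, hc⟩⟩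
        rw [Finset.mem_filter] at hu
        refine ⟨u, hu.1, hu.2, fun v hv hvu => ?_⟩
        by_contra hle
        push_neg at hle
        exact absurd (hmin v (Finset.mem_filter.mpr ⟨hv, hle⟩)) (not_le.mpr hvu)
      · rintro ⟨s, hs, h1, -⟩
        exact ⟨s, hs, h1⟩
    calc c * Q i {ω | ∃ s ∈ G, c ≤ M.S s ω i b}
        = c * Q i (⋃ s ∈ G, A s) := by rw [hcover]
      _ ≤ c * ∑ s ∈ G, Q i (A s) := mul_le_mul_right (measure_biUnion_finset_le G A) _
      _ = ∑ s ∈ G, c * Q i (A s) := by rw [Finset.mul_sum]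
      _ ≤ ∑ s ∈ G, ∫⁻ ω in A s, M.S s ω i b ∂(Q i) := by
          refine Finset.sum_le_sum fun s hs => ?_
          rw [← setLIntegral_const (A s) c]
          exact setLIntegral_mono (hmeas s (hG s hs) i b) fun ω hω => hω.1
      _ = ∑ s ∈ G, M.S0 i b * Q b (A s ∩ {ω | 0 < M.S s ω b i}) :=
          Finset.sum_congr rfl fun s hs => hcons i b s (hG s hs) (A s) (hAmeas s hs)
      _ ≤ ∑ s ∈ G, M.S0 i b * Q b (A s) :=
          Finset.sum_le_sum fun s hs =>
            mul_le_mul_right (measure_mono Set.inter_subset_left) _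
      _ = M.S0 i b * ∑ s ∈ G, Q b (A s) := by rw [← Finset.mul_sum]
      _ = M.S0 i b * Q b (⋃ s ∈ G, A s) := by
          rw [measure_biUnion_finset hAdisj fun s hs => M.F.le s _ (hAmeas s hs)]
      _ ≤ M.S0 i b * 1 := mul_le_mul_right prob_le_one _
      _ = M.S0 i b := mul_one _
  -- an enumeration of enough rational times
  set e : ℕ → ℝ := fun n =>
    if ((Denumerable.ofNat ℚ n : ℚ) : ℝ) ∈ Set.Icc (0 : ℝ) T
    then ((Denumerable.ofNat ℚ n : ℚ) : ℝ) else T with hedef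
  have he_mem : ∀ k, e k ∈ Set.Icc (0 : ℝ) T := by
    intro k
    show (if ((Denumerable.ofNat ℚ k : ℚ) : ℝ) ∈ Set.Icc (0 : ℝ) T
      then ((Denumerable.ofNat ℚ k : ℚ) : ℝ) else T) ∈ Set.Icc (0 : ℝ) T
    split_ifs with h
    · exact h
    · exact hTT
  have he_surj : ∀ q : ℚ, ((q : ℝ)) ∈ Set.Icc (0 : ℝ) T → ∃ k, e k = (q : ℝ) := by
    intro q hq
    obtain ⟨k, hk⟩ := (Denumerable.eqv ℚ).symm.surjective q
    have hk' : (Denumerable.ofNat ℚ k : ℚ) = q := hk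
    refine ⟨k, ?_⟩
    show (if ((Denumerable.ofNat ℚ k : ℚ) : ℝ) ∈ Set.Icc (0 : ℝ) T
      then ((Denumerable.ofNat ℚ k : ℚ) : ℝ) else T) = (q : ℝ)
    rw [hk', if_pos hq]
  -- each matrix entry a.s. never explodes
  have hbad : ∀ b : Fin d, Q i {ω | ∃ t ∈ Set.Icc (0 : ℝ) T, M.S t ω i b = ∞} = 0 := by
    intro b
    set Ebig : Set Ω := ⋂ n : ℕ, ⋃ k : ℕ, {ω | ((n : ℝ≥0∞)) ≤ M.S (e k) ω i b} with hEdef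
    have hsub : {ω | ∃ t ∈ Set.Icc (0 : ℝ) T, M.S t ω i b = ∞} ⊆
        {ω | M.S T ω i b = ∞} ∪ Ebig := by
      rintro ω ⟨t, ht, htop⟩
      rcases eq_or_lt_of_le ht.2 with hTeq | hTlt
      · left
        rw [hTeq] at htop
        exact htop
      · right
        refine Set.mem_iInter.mpr fun n => ?_
        have hrc := M.rc_S ω i b t ⟨ht.1, hTlt⟩
        rw [htop] at hrc
        have hev : (fun u => M.S u ω i b) ⁻¹' Set.Ioi ((n : ℝ≥0∞)) ∈
            nhdsWithin t (Set.Ioi t) := hrc (Ioi_mem_nhds (ENNReal.natCast_lt_top n))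
        rw [mem_nhdsWithin] at hev
        obtain ⟨U, hUopen, htU, hUsub⟩ := hev
        obtain ⟨ε, hε, hball⟩ := Metric.isOpen_iff.mp hUopen t htU
        obtain ⟨q, hq1, hq2⟩ := exists_rat_btwn (lt_min (by linarith : t < t + ε) hTlt)
        have hqT : (q : ℝ) < T := lt_of_lt_of_le hq2 (min_le_right _ _)
        have hqε : (q : ℝ) < t + ε := lt_of_lt_of_le hq2 (min_le_left _ _)
        have hqIcc : ((q : ℝ)) ∈ Set.Icc (0 : ℝ) T :=
          ⟨le_of_lt (lt_of_le_of_lt ht.1 hq1), hqT.le⟩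
        obtain ⟨k, hk⟩ := he_surj q hqIcc
        refine Set.mem_iUnion.mpr ⟨k, ?_⟩
        have hdist : dist ((q : ℝ)) t < ε := by
          rw [Real.dist_eq, abs_of_pos (by linarith)]
          linarith
        have hqU : (q : ℝ) ∈ U ∩ Set.Ioi t := ⟨hball (Metric.mem_ball.mpr hdist), hq1⟩
        have hlt' := hUsub hqU
        show ((n : ℝ≥0∞)) ≤ M.S (e k) ω i b
        rw [hk]
        exact (Set.mem_Ioi.mp hlt').le
    have hE : Q i Ebig = 0 := by
      have key : ∀ n : ℕ, (n : ℝ≥0∞) * Q i Ebig ≤ M.S0 i b := by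
        intro n
        set V : ℕ → Set Ω :=
          fun m => {ω | ∃ s ∈ (Finset.range (m + 1)).image e, ((n : ℝ≥0∞)) ≤ M.S s ω i b}
          with hVdef
        have hVmono : Monotone V := by
          intro m1 m2 hm12 ω hω
          obtain ⟨s, hs, hcs⟩ := hω
          exact ⟨s, Finset.image_subset_image (Finset.range_subset_range.mpr (by omega)) hs, hcs⟩
        have hVsub : Ebig ⊆ ⋃ m, V m := by
          intro ω hω
          obtain ⟨k, hk⟩ := Set.mem_iUnion.mp (Set.mem_iInter.mp hω n)
          exact Set.mem_iUnion.mpr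
            ⟨k, ⟨e k, Finset.mem_image_of_mem e (Finset.mem_range.mpr (by omega)), hk⟩⟩
        calc (n : ℝ≥0∞) * Q i Ebig
            ≤ (n : ℝ≥0∞) * Q i (⋃ m, V m) := mul_le_mul_right (measure_mono hVsub) _
          _ = (n : ℝ≥0∞) * ⨆ m, Q i (V m) := by rw [hVmono.directed_le.measure_iUnion]
          _ = ⨆ m, (n : ℝ≥0∞) * Q i (V m) := by rw [ENNReal.mul_iSup]
          _ ≤ M.S0 i b := iSup_le fun m => by
              refine hfin b ((Finset.range (m + 1)).image e) (fun s hs => ?_) ((n : ℝ≥0∞))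
              obtain ⟨k, -, hk⟩ := Finset.mem_image.mp hs
              exact hk ▸ he_mem k
      by_contra hne
      have hfinE : Q i Ebig ≠ ∞ := (lt_of_le_of_lt prob_le_one ENNReal.one_lt_top).ne
      obtain ⟨n, hn⟩ := ENNReal.exists_nat_gt
        (ENNReal.div_lt_top (hS0lt i b).ne hne).ne
      have : M.S0 i b < (n : ℝ≥0∞) * Q i Ebig :=
        (ENNReal.div_lt_iff (Or.inl hne) (Or.inl hfinE)).mp hn
      exact absurd (key n) (not_le.mpr this)
    have hTnull : Q i {ω | M.S T ω i b = ∞} = 0 := by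
      have h := ae_iff.mp (hae T hTT b)
      simpa using h
    exact measure_mono_null hsub (measure_union_null hTnull hE)
  refine ⟨hsm, fun t ht j => ⟨hae t ht j, hlt t ht j⟩, ?_⟩
  have hcomp : {ω | ∀ t ∈ Set.Icc (0 : ℝ) T, ∑ j, M.S t ω i j < ∞}ᶜ ⊆
      ⋃ b : Fin d, {ω | ∃ t ∈ Set.Icc (0 : ℝ) T, M.S t ω i b = ∞} := by
    intro ω hω
    simp only [Set.mem_compl_iff, Set.mem_setOf_eq, not_forall] at hω
    obtain ⟨t, ht, hsum⟩ := hω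
    have hex : ∃ b, M.S t ω i b = ∞ := by
      by_contra h
      push_neg at h
      exact hsum (ENNReal.sum_lt_top.mpr fun b _ => (h b).lt_top)
    obtain ⟨b, hb⟩ := hex
    exact Set.mem_iUnion.mpr ⟨b, t, ht, hb⟩
  have hcnull : Q i ({ω | ∀ t ∈ Set.Icc (0 : ℝ) T, ∑ j, M.S t ω i j < ∞}ᶜ) = 0 :=
    measure_mono_null hcomp (measure_iUnion_null fun b => hbad b)
  refine le_antisymm prob_le_one ?_
  have hle := measure_union_le (μ := Q i)
    {ω | ∀ t ∈ Set.Icc (0 : ℝ) T, ∑ j, M.S t ω i j < ∞}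
    ({ω | ∀ t ∈ Set.Icc (0 : ℝ) T, ∑ j, M.S t ω i j < ∞}ᶜ)
  rw [Set.union_compl_self, measure_univ, hcnull, add_zero] at hle
  exact hle
end
end

section
/- Suppose (Q_i)_{i=1}^d is a numéraire-consistent family of probability measures. Then for all i,j, all 0 ≤ r ≤ t ≤ T, and every bounded F(t)-measurable random variable X, the generalized change-of-numéraire formula E^{Q_i}[S_{i,j}(t)·X | F(r)] = S_{i,j}(r)·E^{Q_j}[X·1_{{S_{j,i}(t)>0}} | F(r)] holds Q_i-almost surely. -/
open MeasureTheory Filter Set Function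
open scoped ENNReal

noncomputable section

section ChangeOfNumeraireAux

variable {d : ℕ} {Ω : Type*} [mΩ : MeasurableSpace Ω] {T : ℝ}

lemma IsExchangeMatrix.eq_top_of_symm_eq_zero {s : Fin d → Fin d → ℝ≥0∞}
    (hs : IsExchangeMatrix s) {i j : Fin d} (h : s j i = 0) : s i j = ∞ := by
  by_contra h'
  have hd : DefinedProd (s i j) (s j i) :=
    ⟨fun hc => by simp [h] at hc, fun hc => h' hc.1⟩
  have := hs.consistent i j i hd
  rw [h, mul_zero, hs.diag] at this
  exact one_ne_zero this.symm

lemma key_lintegral (M : MarketModel d Ω T) (Q : Fin d → Measure Ω)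
    (hQ : NumeraireConsistent M Q) (i j : Fin d) {u : ℝ} (hu : u ∈ Set.Icc (0:ℝ) T)
    {g : Ω → ℝ≥0∞} (hg : Measurable[M.F u] g) :
    ∫⁻ ω, M.S u ω i j * g ω ∂(Q i)
      = M.S0 i j * ∫⁻ ω in {ω | 0 < M.S u ω j i}, g ω ∂(Q j) := by
  have hm : M.F u ≤ mΩ := M.F.le u
  have hS : Measurable[M.F u] fun ω => M.S u ω i j := M.adapted_S u hu i j
  have hS' : Measurable fun ω => M.S u ω i j := hS.mono hm le_rfl
  set μ₁ := (Q i).withDensity fun ω => M.S u ω i j with hμ₁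
  set μ₂ := M.S0 i j • ((Q j).restrict {ω | 0 < M.S u ω j i}) with hμ₂
  have htrim : μ₁.trim hm = μ₂.trim hm := by
    refine @Measure.ext Ω (M.F u) _ _ fun s hs => ?_
    rw [trim_measurableSet_eq hm hs, trim_measurableSet_eq hm hs, hμ₁, hμ₂,
      withDensity_apply _ (hm s hs), Measure.smul_apply, smul_eq_mul,
      Measure.restrict_apply (hm s hs)]
    exact hQ.2 i j u hu s hs
  calc ∫⁻ ω, M.S u ω i j * g ω ∂(Q i)
      = ∫⁻ ω, g ω ∂μ₁ := by
        rw [hμ₁, lintegral_withDensity_eq_lintegral_mul _ hS' (hg.mono hm le_rfl)]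
        rfl
    _ = ∫⁻ ω, g ω ∂(μ₁.trim hm) := (lintegral_trim hm hg).symm
    _ = ∫⁻ ω, g ω ∂(μ₂.trim hm) := by rw [htrim]
    _ = ∫⁻ ω, g ω ∂μ₂ := lintegral_trim hm hg
    _ = M.S0 i j * ∫⁻ ω in {ω | 0 < M.S u ω j i}, g ω ∂(Q j) := by
        rw [hμ₂, lintegral_smul_measure, smul_eq_mul]

lemma S0_lt_top (M : MarketModel d Ω T) (i j : Fin d) : M.S0 i j < ∞ :=
  lt_of_le_of_lt (Finset.single_le_sum (f := fun k => M.S0 i k)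
    (fun _ _ => zero_le) (Finset.mem_univ j)) (M.active_S0 i)

lemma lintegral_S_lt_top (M : MarketModel d Ω T) (Q : Fin d → Measure Ω)
    (hQ : NumeraireConsistent M Q) (i j : Fin d) {u : ℝ} (hu : u ∈ Set.Icc (0:ℝ) T) :
    ∫⁻ ω, M.S u ω i j ∂(Q i) < ∞ := by
  have h1 : IsProbabilityMeasure (Q j) := hQ.1 j
  calc ∫⁻ ω, M.S u ω i j ∂(Q i) = ∫⁻ ω, M.S u ω i j * 1 ∂(Q i) := by simp
    _ = M.S0 i j * ∫⁻ _ in {ω | 0 < M.S u ω j i}, 1 ∂(Q j) :=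
        key_lintegral M Q hQ i j hu (measurable_const : Measurable[M.F u] fun _ => (1:ℝ≥0∞))
    _ = M.S0 i j * (Q j) {ω | 0 < M.S u ω j i} := by rw [setLIntegral_one]
    _ ≤ M.S0 i j * 1 := mul_le_mul_right prob_le_one _
    _ < ∞ := by rw [mul_one]; exact S0_lt_top M i j

lemma breal (M : MarketModel d Ω T) (Q : Fin d → Measure Ω)
    (hQ : NumeraireConsistent M Q) (i j : Fin d) {u : ℝ} (hu : u ∈ Set.Icc (0:ℝ) T)
    {s : Set Ω} (hs : MeasurableSet[M.F u] s) {h : Ω → ℝ} (hh : Measurable[M.F u] h)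
    (hint1 : IntegrableOn (fun ω => (M.S u ω i j).toReal * h ω) s (Q i))
    (hint2 : IntegrableOn h (s ∩ {ω | 0 < M.S u ω j i}) (Q j)) :
    ∫ ω in s, (M.S u ω i j).toReal * h ω ∂(Q i)
      = (M.S0 i j).toReal * ∫ ω in s ∩ {ω | 0 < M.S u ω j i}, h ω ∂(Q j) := by
  have hm : M.F u ≤ mΩ := M.F.le u
  set P := {ω | 0 < M.S u ω j i} with hP
  have hS : Measurable fun ω => M.S u ω i j := (M.adapted_S u hu i j).mono hm le_rfl
  have hfin : ∀ᵐ ω ∂(Q i), M.S u ω i j < ∞ :=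
    ae_lt_top hS (lintegral_S_lt_top M Q hQ i j hu).ne
  have key : ∀ h' : Ω → ℝ, Measurable[M.F u] h' →
      ∫⁻ ω in s, ENNReal.ofReal ((M.S u ω i j).toReal * h' ω) ∂(Q i)
        = M.S0 i j * ∫⁻ ω in s ∩ P, ENNReal.ofReal (h' ω) ∂(Q j) := by
    intro h' hh'
    have hg : Measurable[M.F u] (s.indicator fun ω => ENNReal.ofReal (h' ω)) :=
      (hh'.ennreal_ofReal).indicator hs
    calc ∫⁻ ω in s, ENNReal.ofReal ((M.S u ω i j).toReal * h' ω) ∂(Q i)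
        = ∫⁻ ω in s, M.S u ω i j * ENNReal.ofReal (h' ω) ∂(Q i) := by
          refine lintegral_congr_ae (ae_restrict_of_ae ?_)
          filter_upwards [hfin] with ω hω
          rw [ENNReal.ofReal_mul ENNReal.toReal_nonneg, ENNReal.ofReal_toReal hω.ne]
      _ = ∫⁻ ω, M.S u ω i j * (s.indicator fun ω => ENNReal.ofReal (h' ω)) ω ∂(Q i) := by
          rw [← lintegral_indicator (hm s hs)]
          congr 1; funext ω
          by_cases hmem : ω ∈ s <;> simp [hmem]
      _ = M.S0 i j * ∫⁻ ω in P, (s.indicator fun ω => ENNReal.ofReal (h' ω)) ω ∂(Q j) :=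
          key_lintegral M Q hQ i j hu hg
      _ = M.S0 i j * ∫⁻ ω in s ∩ P, ENNReal.ofReal (h' ω) ∂(Q j) := by
          rw [lintegral_indicator (hm s hs), Measure.restrict_restrict (hm s hs)]
  have key1 := key h hh
  have key2 := key (fun ω => -h ω) hh.neg
  have e1 : ∫ ω in s, (M.S u ω i j).toReal * h ω ∂(Q i)
      = (M.S0 i j * ∫⁻ ω in s ∩ P, ENNReal.ofReal (h ω) ∂(Q j)).toReal
        - (M.S0 i j * ∫⁻ ω in s ∩ P, ENNReal.ofReal (-h ω) ∂(Q j)).toReal := by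
    rw [integral_eq_lintegral_pos_part_sub_lintegral_neg_part hint1]
    simp only [← mul_neg]
    rw [key1, key2]
  have e2 : ∫ ω in s ∩ P, h ω ∂(Q j)
      = (∫⁻ ω in s ∩ P, ENNReal.ofReal (h ω) ∂(Q j)).toReal
        - (∫⁻ ω in s ∩ P, ENNReal.ofReal (-h ω) ∂(Q j)).toReal :=
    integral_eq_lintegral_pos_part_sub_lintegral_neg_part hint2
  rw [e1, e2, ENNReal.toReal_mul, ENNReal.toReal_mul, mul_sub]

lemma null_claim (M : MarketModel d Ω T) (Q : Fin d → Measure Ω)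
    (hQ : NumeraireConsistent M Q) (i j : Fin d) {r t : ℝ}
    (hr : r ∈ Set.Icc (0:ℝ) T) (ht : t ∈ Set.Icc (0:ℝ) T) (hrt : r ≤ t)
    (hc : M.S0 i j ≠ 0) :
    Q j ({ω | M.S r ω j i = 0} ∩ {ω | 0 < M.S t ω j i}) = 0 := by
  set A0 := {ω | M.S r ω j i = 0} with hA0
  have hA0r : MeasurableSet[M.F r] A0 :=
    M.adapted_S r hr j i (measurableSet_singleton 0)
  have h1 := hQ.2 i j r hr A0 hA0r
  have hinter : A0 ∩ {ω | 0 < M.S r ω j i} = ∅ := by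
    ext ω
    simp only [Set.mem_inter_iff, Set.mem_setOf_eq, Set.mem_empty_iff_false, iff_false, not_and,
      hA0]
    intro h0
    simp [h0]
  rw [hinter, measure_empty, mul_zero] at h1
  have h2 : ∫⁻ ω in A0, M.S r ω i j ∂(Q i) = ∞ * Q i A0 := by
    rw [setLIntegral_congr_fun (M.F.le r A0 hA0r)
      (fun ω hω => (M.exchange_S r hr ω).eq_top_of_symm_eq_zero hω),
      setLIntegral_const]
  rw [h2] at h1
  have hQiA0 : Q i A0 = 0 := by
    rcases mul_eq_zero.mp h1 with h | h
    · exact absurd h ENNReal.top_ne_zero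
    · exact h
  have h3 := hQ.2 i j t ht A0 (M.F.mono hrt A0 hA0r)
  rw [Measure.restrict_eq_zero.mpr hQiA0, lintegral_zero_measure] at h3
  rcases mul_eq_zero.mp h3.symm with h | h
  · exact absurd h hc
  · exact h

lemma integrable_of_bounded {μ : Measure Ω} [IsFiniteMeasure μ] {h : Ω → ℝ}
    (hmeas : AEStronglyMeasurable h μ) {b : ℝ} (hb : ∀ᵐ ω ∂μ, |h ω| ≤ b) :
    Integrable h μ :=
  Integrable.mono' (integrable_const b) hmeas
    (by filter_upwards [hb] with ω hω; rwa [Real.norm_eq_abs])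

lemma integrable_S_toReal (M : MarketModel d Ω T) (Q : Fin d → Measure Ω)
    (hQ : NumeraireConsistent M Q) (i j : Fin d) {u : ℝ} (hu : u ∈ Set.Icc (0:ℝ) T) :
    Integrable (fun ω => (M.S u ω i j).toReal) (Q i) :=
  integrable_toReal_of_lintegral_ne_top
    ((M.adapted_S u hu i j).mono (M.F.le u) le_rfl).aemeasurable
    (lintegral_S_lt_top M Q hQ i j hu).ne

end ChangeOfNumeraireAux

/-- Proposition, part (a), change-of-numéraire formula: for a
numéraire-consistent family `(Q_i)`, all `i, j`, all `0 ≤ r ≤ t ≤ T`, and every bounded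
`F(t)`-measurable `X`, one has
`E^{Q_i}[S_{i,j}(t) X | F(r)] = S_{i,j}(r) E^{Q_j}[X 1_{{S_{j,i}(t) > 0}} | F(r)]`,
`Q_i`-almost surely. -/
theorem numeraireConsistent_change_of_numeraire {d : ℕ} {Ω : Type*} [MeasurableSpace Ω]
    {T : ℝ} (hd : 0 < d) (M : MarketModel d Ω T) (Q : Fin d → Measure Ω)
    (hQ : NumeraireConsistent M Q) :
    ∀ i j : Fin d, ∀ r t : ℝ, 0 ≤ r → r ≤ t → t ≤ T →
      ∀ X : Ω → ℝ, (∃ b : ℝ, ∀ ω, |X ω| ≤ b) → StronglyMeasurable[M.F t] X →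
        (Q i)[fun ω => (M.S t ω i j).toReal * X ω|M.F r] =ᵐ[Q i]
          fun ω => (M.S r ω i j).toReal *
            ((Q j)[fun ω' => X ω' *
              Set.indicator {ω'' | 0 < M.S t ω'' j i} (fun _ => (1 : ℝ)) ω'|M.F r]) ω := by
  intro i j r t hr0 hrt htT X hXb hX
  obtain ⟨b, hb⟩ := hXb
  have ht : t ∈ Set.Icc (0:ℝ) T := ⟨le_trans hr0 hrt, htT⟩
  have hr : r ∈ Set.Icc (0:ℝ) T := ⟨hr0, le_trans hrt htT⟩
  have hmr : M.F r ≤ ‹MeasurableSpace Ω› := M.F.le r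
  have hmt : M.F t ≤ ‹MeasurableSpace Ω› := M.F.le t
  have hFrFt : M.F r ≤ M.F t := M.F.mono hrt
  haveI hQi : IsProbabilityMeasure (Q i) := hQ.1 i
  haveI hQj : IsProbabilityMeasure (Q j) := hQ.1 j
  haveI : SigmaFinite ((Q i).trim hmr) := by
    haveI : IsFiniteMeasure ((Q i).trim hmr) := isFiniteMeasure_trim hmr
    infer_instance
  haveI : SigmaFinite ((Q j).trim hmr) := by
    haveI : IsFiniteMeasure ((Q j).trim hmr) := isFiniteMeasure_trim hmr
    infer_instance
  set P := {ω | 0 < M.S t ω j i} with hPdef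
  have hPmt : MeasurableSet[M.F t] P :=
    measurableSet_lt measurable_const (M.adapted_S t ht j i)
  set Pr := {ω | 0 < M.S r ω j i} with hPrdef
  have hPrmr : MeasurableSet[M.F r] Pr :=
    measurableSet_lt measurable_const (M.adapted_S r hr j i)
  set XI := fun ω' => X ω' * Set.indicator P (fun _ => (1:ℝ)) ω' with hXIdef
  have hXIeq : XI = P.indicator X := by
    funext ω; by_cases hω : ω ∈ P <;> simp [hXIdef, hω]
  have hXIsm : StronglyMeasurable[M.F t] XI :=
    hX.mul (stronglyMeasurable_const.indicator hPmt)
  have hXIb : ∀ ω, |XI ω| ≤ max b 0 := by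
    intro ω
    rw [hXIeq]
    by_cases hω : ω ∈ P
    · simp only [Set.indicator_of_mem hω]
      exact le_trans (hb ω) (le_max_left _ _)
    · simp [Set.indicator_of_notMem hω, le_max_right]
  have hXIint : Integrable XI (Q j) :=
    integrable_of_bounded ((hXIsm.mono hmt).aestronglyMeasurable) (ae_of_all _ hXIb)
  set Y := (Q j)[XI|M.F r] with hYdef
  have hYsm : StronglyMeasurable[M.F r] Y := stronglyMeasurable_condExp
  have hYint : Integrable Y (Q j) := integrable_condExp
  set b' : NNReal := ⟨max b 0, le_max_right _ _⟩ with hb'def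
  have hYb : ∀ᵐ ω ∂(Q j), |Y ω| ≤ (b' : ℝ) :=
    ae_bdd_condExp_of_ae_bdd (ae_of_all _ hXIb)
  set N := {ω | (b' : ℝ) < |Y ω|} with hNdef
  have hNr : MeasurableSet[M.F r] N := by
    have hYm : Measurable[M.F r] Y := hYsm.measurable
    have habs : Measurable[M.F r] fun ω => |Y ω| := continuous_abs.measurable.comp hYm
    exact habs measurableSet_Ioi
  have hNnull : Q j N = 0 := by
    rw [measure_eq_zero_iff_ae_notMem]
    filter_upwards [hYb] with ω hω
    simp [hNdef, not_lt, hω]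
  have hSr : Measurable fun ω => M.S r ω i j := (M.adapted_S r hr i j).mono hmr le_rfl
  have hSrNg : Q i (N ∩ {ω | M.S r ω i j ≠ 0}) = 0 := by
    have h1 := hQ.2 i j r hr N hNr
    rw [measure_mono_null Set.inter_subset_left hNnull, mul_zero] at h1
    rw [setLIntegral_eq_zero_iff (hmr N hNr) hSr] at h1
    have h2 := h1
    rw [measure_eq_zero_iff_ae_notMem]
    filter_upwards [h2] with ω hω
    rintro ⟨hωN, hωS⟩
    exact hωS (hω hωN)
  have hae : ∀ᵐ ω ∂(Q i), |Y ω| ≤ (b' : ℝ) ∨ (M.S r ω i j).toReal = 0 := by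
    have h2 := measure_eq_zero_iff_ae_notMem.mp hSrNg
    filter_upwards [h2] with ω hω
    by_cases hY' : |Y ω| ≤ (b' : ℝ)
    · exact Or.inl hY'
    · right
      have hωN : ω ∈ N := by simpa [hNdef] using not_le.mp hY'
      have : M.S r ω i j = 0 := by
        by_contra hne
        exact hω ⟨hωN, hne⟩
      simp [this]
  have hgsm : StronglyMeasurable[M.F r] (fun ω => (M.S r ω i j).toReal * Y ω) :=
    ((M.adapted_S r hr i j).ennreal_toReal.stronglyMeasurable).mul hYsm
  have hgint : Integrable (fun ω => (M.S r ω i j).toReal * Y ω) (Q i) := by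
    refine Integrable.mono' ((integrable_S_toReal M Q hQ i j hr).mul_const (b' : ℝ))
      (hgsm.mono hmr).aestronglyMeasurable ?_
    filter_upwards [hae] with ω hω
    rw [Real.norm_eq_abs, abs_mul, abs_of_nonneg ENNReal.toReal_nonneg]
    rcases hω with hω | hω
    · exact mul_le_mul_of_nonneg_left hω ENNReal.toReal_nonneg
    · rw [hω]; simp
  have hfT : Integrable (fun ω => (M.S t ω i j).toReal * X ω) (Q i) := by
    refine Integrable.mono' ((integrable_S_toReal M Q hQ i j ht).mul_const b)
      ((((M.adapted_S t ht i j).ennreal_toReal.stronglyMeasurable.mul hX).mono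
        hmt).aestronglyMeasurable) ?_
    refine ae_of_all _ fun ω => ?_
    rw [Real.norm_eq_abs, abs_mul, abs_of_nonneg ENNReal.toReal_nonneg]
    exact mul_le_mul_of_nonneg_left (hb ω) ENNReal.toReal_nonneg
  have hset : ∀ s : Set Ω, MeasurableSet[M.F r] s → Q i s < ∞ →
      ∫ ω in s, (M.S r ω i j).toReal * Y ω ∂(Q i)
        = ∫ ω in s, (M.S t ω i j).toReal * X ω ∂(Q i) := by
    intro s hs _
    have hXint_sP : IntegrableOn X (s ∩ P) (Q j) :=
      (integrable_of_bounded ((hX.mono hmt).aestronglyMeasurable)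
        (ae_of_all _ hb)).integrableOn
    have step1 : ∫ ω in s, (M.S t ω i j).toReal * X ω ∂(Q i)
        = (M.S0 i j).toReal * ∫ ω in s ∩ P, X ω ∂(Q j) :=
      breal M Q hQ i j ht (hFrFt s hs) hX.measurable hfT.integrableOn hXint_sP
    have step4 : ∫ ω in s, (M.S r ω i j).toReal * Y ω ∂(Q i)
        = (M.S0 i j).toReal * ∫ ω in s ∩ Pr, Y ω ∂(Q j) :=
      breal M Q hQ i j hr hs hYsm.measurable hgint.integrableOn hYint.integrableOn
    rw [step1, step4]
    by_cases hc : M.S0 i j = 0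
    · rw [hc]; simp
    congr 1
    have hzero : ∫ ω in s \ Pr, Y ω ∂(Q j) = 0 := by
      have hsd : MeasurableSet[M.F r] (s \ Pr) := hs.diff hPrmr
      rw [hYdef, setIntegral_condExp hmr hXIint hsd, hXIeq,
        setIntegral_indicator (hmt P hPmt)]
      have hnull : Q j ((s \ Pr) ∩ P) = 0 := by
        refine measure_mono_null ?_ (null_claim M Q hQ i j hr ht hrt hc)
        rintro ω ⟨⟨-, hω2⟩, hω3⟩
        refine ⟨?_, hω3⟩
        simpa [hPrdef, not_lt, le_zero_iff] using hω2
      rw [Measure.restrict_eq_zero.mpr hnull, integral_zero_measure]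
    have hsplit : ∫ ω in s ∩ Pr, Y ω ∂(Q j) = ∫ ω in s, Y ω ∂(Q j) := by
      have h3 := integral_inter_add_diff (μ := Q j) (f := Y) (s := s) (t := Pr)
        (hmr Pr hPrmr) hYint.integrableOn
      rw [← h3, hzero, add_zero]
    rw [hsplit, hYdef, setIntegral_condExp hmr hXIint hs, hXIeq,
      setIntegral_indicator (hmt P hPmt)]
  exact (ae_eq_condExp_of_forall_setIntegral_eq hmr hfT
    (fun s _ _ => hgint.integrableOn) hset hgsm.aestronglyMeasurable).symm
end
end

section
/- Let Q̄ be a valuation measure with respect to the basket and define, for each i, the probability measure Q_i on (Ω, F(T)) by dQ_i/dQ̄ = S̄_i(T)/S̄_i(0) (note E^{Q̄}[S̄_i(T)] = S̄_i(0) > 0 since S̄ is a Q̄-martingale and A(0) = {1,…,d}). Then (Q_i)_{i=1}^d is a numéraire-consistent family of probability measures, and ∑_i S̄_i(0)·Q_i = Q̄; in particular ∑_i Q_i is equivalent to Q̄. -/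
open MeasureTheory Filter Set Function
open scoped ENNReal

noncomputable section

section ExchangeHelpers

variable {d : ℕ} {s : Fin d → Fin d → ℝ≥0∞}

lemma exch_row_sum (hs : IsExchangeMatrix s) {a b : Fin d}
    (h0 : s a b ≠ 0) (h1 : s a b ≠ ∞) :
    ∑ k, s a k = s a b * ∑ k, s b k := by
  rw [Finset.mul_sum]
  exact Finset.sum_congr rfl fun k _ =>
    (hs.consistent a b k ⟨fun h => h0 h.1, fun h => h1 h.1⟩).symm

lemma exch_entry_le (a b : Fin d) : s a b ≤ ∑ k, s a k :=
  Finset.single_le_sum (f := fun k => s a k) (fun _ _ => zero_le) (Finset.mem_univ b)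

lemma exch_pair_one (hs : IsExchangeMatrix s) {a b : Fin d}
    (h0 : s a b ≠ 0) (h1 : s a b ≠ ∞) : s a b * s b a = 1 :=
  (hs.consistent a b a ⟨fun h => h0 h.1, fun h => h1 h.1⟩).trans (hs.diag a)

lemma exch_pair (hs : IsExchangeMatrix s) {a b : Fin d}
    (h0 : s a b ≠ 0) (h1 : s a b ≠ ∞) : s b a = (s a b)⁻¹ := by
  calc s b a = (s a b)⁻¹ * (s a b * s b a) := by
        rw [← mul_assoc, ENNReal.inv_mul_cancel h0 h1, one_mul]
  _ = (s a b)⁻¹ := by rw [exch_pair_one hs h0 h1, mul_one]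

lemma exch_ne_zero (hs : IsExchangeMatrix s) {a b : Fin d}
    (hba : s b a ≠ ∞) : s a b ≠ 0 := by
  intro h0
  have h1 := hs.consistent a b a ⟨fun h => hba h.2, fun h => by simp [h0] at h⟩
  rw [h0, zero_mul, hs.diag] at h1
  exact zero_ne_one h1

lemma exch_claim (hs : IsExchangeMatrix s) {i0 : Fin d} (hfin : ∑ k, s i0 k ≠ ∞) (j : Fin d) :
    (∑ k, s j k)⁻¹ = s i0 j * (∑ k, s i0 k)⁻¹ := by
  rcases eq_or_ne (s i0 j) 0 with h0 | h0
  · rw [h0, zero_mul, ENNReal.inv_eq_zero]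
    by_contra hne
    exact exch_ne_zero hs (ne_top_of_le_ne_top hne (exch_entry_le j i0)) h0
  · have h1 : s i0 j ≠ ∞ := ne_top_of_le_ne_top hfin (exch_entry_le i0 j)
    have hji := exch_pair hs h0 h1
    have hji0 : s j i0 ≠ 0 := by rw [hji]; exact ENNReal.inv_ne_zero.2 h1
    have hji1 : s j i0 ≠ ∞ := by rw [hji]; exact ENNReal.inv_ne_top.2 h0
    rw [exch_row_sum hs hji0 hji1, ENNReal.mul_inv (Or.inl hji0) (Or.inl hji1), hji, inv_inv]

lemma exch_sum_inv_sum (hs : IsExchangeMatrix s) {i0 : Fin d} (hfin : ∑ k, s i0 k ≠ ∞) :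
    ∑ j, (∑ k, s j k)⁻¹ = 1 := by
  have h1le : (1 : ℝ≥0∞) ≤ ∑ k, s i0 k := (hs.diag i0) ▸ exch_entry_le i0 i0
  calc ∑ j, (∑ k, s j k)⁻¹ = ∑ j, s i0 j * (∑ k, s i0 k)⁻¹ :=
        Finset.sum_congr rfl fun j _ => exch_claim hs hfin j
  _ = (∑ j, s i0 j) * (∑ k, s i0 k)⁻¹ := (Finset.sum_mul ..).symm
  _ = 1 := ENNReal.mul_inv_cancel (zero_lt_one.trans_le h1le).ne' hfin

lemma exch_sum_inv_sum_le (hs : IsExchangeMatrix s) : ∑ j, (∑ k, s j k)⁻¹ ≤ 1 := by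
  by_cases h : ∃ i0, ∑ k, s i0 k ≠ ∞
  · obtain ⟨i0, h⟩ := h
    exact le_of_eq (exch_sum_inv_sum hs h)
  · push_neg at h
    simp [h]

lemma exch_pointwise (hs : IsExchangeMatrix s) (i j : Fin d) :
    s i j * (∑ k, s i k)⁻¹ = if 0 < s j i then (∑ k, s j k)⁻¹ else 0 := by
  rcases eq_or_ne (∑ k, s i k) ∞ with hRi | hRi
  · rw [hRi, ENNReal.inv_top, mul_zero]
    split
    case isTrue h =>
      rcases eq_or_ne (∑ k, s j k) ∞ with hRj | hRj
      · rw [hRj, ENNReal.inv_top]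
      · exfalso
        have hji1 : s j i ≠ ∞ := ne_top_of_le_ne_top hRj (exch_entry_le j i)
        exact hRj ((exch_row_sum hs h.ne' hji1).trans
          (by rw [hRi, ENNReal.mul_top h.ne']))
    case isFalse h => rfl
  · rcases eq_or_ne (s i j) 0 with h0 | h0
    · rw [h0, zero_mul]
      have hji : s j i = ∞ := by
        by_contra hji
        exact exch_ne_zero hs hji h0
      have hpos : 0 < s j i := by simp [hji]
      have hRj : ∑ k, s j k = ∞ := top_unique (le_trans hji.ge (exch_entry_le j i))
      rw [if_pos hpos, hRj, ENNReal.inv_top]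
    · have h1 : s i j ≠ ∞ := ne_top_of_le_ne_top hRi (exch_entry_le i j)
      have hji := exch_pair hs h0 h1
      have pos : 0 < s j i := by
        rw [hji]
        exact ENNReal.inv_pos.2 h1
      rw [if_pos pos]
      exact (exch_claim hs hRi j).symm

end ExchangeHelpers
section MeasureHelpers

variable {d : ℕ} {Ω : Type*} [mΩ : MeasurableSpace Ω] {T : ℝ}

lemma MarketModel.meas_S' (M : MarketModel d Ω T) {t : ℝ} (ht : t ∈ Set.Icc (0:ℝ) T)
    (i j : Fin d) : Measurable fun ω => M.S t ω i j :=
  (M.adapted_S t ht i j).mono (M.F.le t) le_rfl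

lemma MarketModel.meas_Sbar (M : MarketModel d Ω T) {t : ℝ} (ht : t ∈ Set.Icc (0:ℝ) T)
    (i : Fin d) : Measurable[M.F t] (M.Sbar i t) :=
  (Finset.measurable_sum Finset.univ fun j _ => M.adapted_S t ht i j).inv

lemma MarketModel.meas_Sbar' (M : MarketModel d Ω T) {t : ℝ} (ht : t ∈ Set.Icc (0:ℝ) T)
    (i : Fin d) : Measurable (M.Sbar i t) :=
  (M.meas_Sbar ht i).mono (M.F.le t) le_rfl

lemma MarketModel.Sbar_ne_top (M : MarketModel d Ω T) {t : ℝ} (ht : t ∈ Set.Icc (0:ℝ) T)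
    (i : Fin d) (ω : Ω) : M.Sbar i t ω ≠ ∞ := by
  have h1 : (1 : ℝ≥0∞) ≤ ∑ j, M.S t ω i j :=
    (M.exchange_S t ht ω).diag i ▸ exch_entry_le (s := fun a b => M.S t ω a b) i i
  exact ENNReal.inv_ne_top.2 (zero_lt_one.trans_le h1).ne'

lemma MarketModel.Sbar_zero_eq (M : MarketModel d Ω T) (i : Fin d) (ω : Ω) :
    M.Sbar i 0 ω = (∑ j, M.S0 i j)⁻¹ := by
  unfold MarketModel.Sbar
  rw [M.init_S ω]

lemma lint_toReal {μ : Measure Ω} {f : Ω → ℝ≥0∞} (hne : ∀ ω, f ω ≠ ∞)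
    (hint : Integrable (fun ω => (f ω).toReal) μ) :
    ∫⁻ ω, f ω ∂μ = ENNReal.ofReal (∫ ω, (f ω).toReal ∂μ) := by
  rw [ofReal_integral_eq_lintegral_ofReal hint (ae_of_all _ fun ω => ENNReal.toReal_nonneg)]
  exact lintegral_congr fun ω => (ENNReal.ofReal_toReal (hne ω)).symm

/-- Key lemma: the `withDensity` measures with densities `S̄ᵢ(T)` and `S̄ᵢ(t)` agree on
`F(t)`-measurable sets. -/
lemma key_setL (M : MarketModel d Ω T) (Qb : Measure Ω) (hQb : IsValuationMeasure M Qb)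
    (i : Fin d) {t : ℝ} (ht : t ∈ Set.Icc (0:ℝ) T) {B : Set Ω}
    (hB : MeasurableSet[M.F t] B) :
    ∫⁻ ω in B, M.Sbar i T ω ∂Qb = ∫⁻ ω in B, M.Sbar i t ω ∂Qb := by
  haveI : IsProbabilityMeasure Qb := hQb.1
  have hT : T ∈ Set.Icc (0:ℝ) T := ⟨M.T_pos.le, le_rfl⟩
  obtain ⟨hmes, hmart⟩ := hQb.2 i
  have hintT : Integrable (fun ω => (M.Sbar i T ω).toReal) Qb := (hmes T hT).2
  have hintt : Integrable (fun ω => (M.Sbar i t ω).toReal) Qb := (hmes t ht).2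
  have hce := hmart t ht T hT ht.2
  have hint_eq : ∫ ω in B, (M.Sbar i T ω).toReal ∂Qb
      = ∫ ω in B, (M.Sbar i t ω).toReal ∂Qb := by
    rw [← setIntegral_condExp (M.F.le t) hintT hB]
    exact integral_congr_ae (ae_restrict_of_ae hce)
  rw [lint_toReal (fun ω => M.Sbar_ne_top hT i ω) hintT.restrict,
    lint_toReal (fun ω => M.Sbar_ne_top ht i ω) hintt.restrict, hint_eq]

/-- Key lemma: integrating an `F(t)`-measurable function against `S̄ᵢ(T) dQ̄` or
`S̄ᵢ(t) dQ̄` gives the same result. -/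
lemma key_mulL (M : MarketModel d Ω T) (Qb : Measure Ω) (hQb : IsValuationMeasure M Qb)
    (i : Fin d) {t : ℝ} (ht : t ∈ Set.Icc (0:ℝ) T) {f : Ω → ℝ≥0∞}
    (hf : Measurable[M.F t] f) :
    ∫⁻ ω, f ω * M.Sbar i T ω ∂Qb = ∫⁻ ω, f ω * M.Sbar i t ω ∂Qb := by
  have hT : T ∈ Set.Icc (0:ℝ) T := ⟨M.T_pos.le, le_rfl⟩
  have hmT : Measurable (M.Sbar i T) := M.meas_Sbar' hT i
  have hmt : Measurable (M.Sbar i t) := M.meas_Sbar' ht i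
  have hfm : Measurable f := hf.mono (M.F.le t) le_rfl
  have htrim : (Qb.withDensity (M.Sbar i T)).trim (M.F.le t)
      = (Qb.withDensity (M.Sbar i t)).trim (M.F.le t) := by
    refine @MeasureTheory.Measure.ext Ω (M.F t) _ _ fun s hs => ?_
    rw [trim_measurableSet_eq _ hs, trim_measurableSet_eq _ hs,
      withDensity_apply _ (M.F.le t s hs), withDensity_apply _ (M.F.le t s hs)]
    exact key_setL M Qb hQb i ht hs
  calc ∫⁻ ω, f ω * M.Sbar i T ω ∂Qb = ∫⁻ ω, (M.Sbar i T * f) ω ∂Qb := by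
        simp only [Pi.mul_apply, mul_comm]
  _ = ∫⁻ ω, f ω ∂(Qb.withDensity (M.Sbar i T)) :=
        (lintegral_withDensity_eq_lintegral_mul Qb hmT hfm).symm
  _ = ∫⁻ ω, f ω ∂((Qb.withDensity (M.Sbar i T)).trim (M.F.le t)) :=
        (lintegral_trim (M.F.le t) hf).symm
  _ = ∫⁻ ω, f ω ∂((Qb.withDensity (M.Sbar i t)).trim (M.F.le t)) := by rw [htrim]
  _ = ∫⁻ ω, f ω ∂(Qb.withDensity (M.Sbar i t)) := lintegral_trim (M.F.le t) hf
  _ = ∫⁻ ω, (M.Sbar i t * f) ω ∂Qb := lintegral_withDensity_eq_lintegral_mul Qb hmt hfm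
  _ = ∫⁻ ω, f ω * M.Sbar i t ω ∂Qb := by simp only [Pi.mul_apply, mul_comm]

lemma key_setmul (M : MarketModel d Ω T) (Qb : Measure Ω) (hQb : IsValuationMeasure M Qb)
    (i : Fin d) {t : ℝ} (ht : t ∈ Set.Icc (0:ℝ) T) {f : Ω → ℝ≥0∞}
    (hf : Measurable[M.F t] f) {A : Set Ω} (hA : MeasurableSet[M.F t] A) :
    ∫⁻ ω in A, f ω * M.Sbar i T ω ∂Qb = ∫⁻ ω in A, f ω * M.Sbar i t ω ∂Qb := by
  rw [← lintegral_indicator (M.F.le t _ hA), ← lintegral_indicator (M.F.le t _ hA)]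
  have h1 := key_mulL M Qb hQb i ht (hf.indicator hA)
  calc ∫⁻ ω, A.indicator (fun ω => f ω * M.Sbar i T ω) ω ∂Qb
      = ∫⁻ ω, A.indicator f ω * M.Sbar i T ω ∂Qb :=
        lintegral_congr fun ω => by by_cases h : ω ∈ A <;> simp [h]
  _ = ∫⁻ ω, A.indicator f ω * M.Sbar i t ω ∂Qb := h1
  _ = ∫⁻ ω, A.indicator (fun ω => f ω * M.Sbar i t ω) ω ∂Qb :=
        lintegral_congr fun ω => by by_cases h : ω ∈ A <;> simp [h]

end MeasureHelpers

/-- disaggregation densities: given a valuation measure `Q̄` with respect to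
the basket, the measures `Q_i` defined by `dQ_i/dQ̄ = S̄_i(T)/S̄_i(0)` form a
numéraire-consistent family, `∑ i, S̄_i(0) Q_i = Q̄`, and `∑ i, Q i` is equivalent to `Q̄`. -/
theorem disaggregation_densities {d : ℕ} {Ω : Type*} [MeasurableSpace Ω] {T : ℝ}
    (hd : 0 < d) (M : MarketModel d Ω T) (Qb : Measure Ω)
    (hQb : IsValuationMeasure M Qb) (Q : Fin d → Measure Ω)
    (hQdef : ∀ i, Q i = Qb.withDensity fun ω => M.Sbar i T ω / M.Sbar i 0 ω) :
    NumeraireConsistent M Q ∧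
    (∑ i, ((∑ j, M.S0 i j)⁻¹ • Q i)) = Qb ∧
    ((∑ i, Q i) ≪ Qb ∧ Qb ≪ (∑ i, Q i)) := by
  haveI hPQb : IsProbabilityMeasure Qb := hQb.1
  have hT : T ∈ Set.Icc (0:ℝ) T := ⟨M.T_pos.le, le_rfl⟩
  have h0T : (0:ℝ) ∈ Set.Icc (0:ℝ) T := ⟨le_rfl, M.T_pos.le⟩
  have hΩ : Nonempty Ω := by
    by_contra h
    rw [not_nonempty_iff] at h
    have h1 := hPQb.measure_univ
    rw [Set.univ_eq_empty_iff.2 h, measure_empty] at h1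
    exact zero_ne_one h1
  obtain ⟨ω₀⟩ := hΩ
  have hs0 : IsExchangeMatrix M.S0 := by
    have h := M.exchange_S 0 h0T ω₀
    rwa [M.init_S ω₀] at h
  have hc_top : ∀ i, (∑ k, M.S0 i k) ≠ ∞ := fun i => (M.active_S0 i).ne
  have hc_one : ∀ i, (1:ℝ≥0∞) ≤ ∑ k, M.S0 i k := fun i => hs0.diag i ▸ exch_entry_le i i
  have hc_ne0 : ∀ i, (∑ k, M.S0 i k) ≠ 0 := fun i => (zero_lt_one.trans_le (hc_one i)).ne'
  have hS0_top : ∀ i j, M.S0 i j ≠ ∞ :=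
    fun i j => ne_top_of_le_ne_top (hc_top i) (exch_entry_le i j)
  have hS0_ne0 : ∀ i j, M.S0 i j ≠ 0 := fun i j => exch_ne_zero hs0 (hS0_top j i)
  have hdens : ∀ i, Q i = Qb.withDensity fun ω => M.Sbar i T ω * ∑ k, M.S0 i k := by
    intro i
    rw [hQdef i]
    congr 1
    funext ω
    rw [M.Sbar_zero_eq i ω, div_eq_mul_inv, inv_inv]
  have hmSbT : ∀ i, Measurable (M.Sbar i T) := fun i => M.meas_Sbar' hT i
  have hQapp : ∀ i (s : Set Ω), MeasurableSet s →
      Q i s = (∑ k, M.S0 i k) * ∫⁻ ω in s, M.Sbar i T ω ∂Qb := by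
    intro i s hs
    rw [hdens i, withDensity_apply _ hs, lintegral_mul_const' _ _ (hc_top i), mul_comm]
  have hintSbT : ∀ i, ∫⁻ ω, M.Sbar i T ω ∂Qb = (∑ k, M.S0 i k)⁻¹ := by
    intro i
    have h := key_setL M Qb hQb i h0T (@MeasurableSet.univ Ω (M.F 0))
    rw [setLIntegral_univ, setLIntegral_univ] at h
    rw [h]
    calc ∫⁻ ω, M.Sbar i 0 ω ∂Qb = ∫⁻ _, (∑ k, M.S0 i k)⁻¹ ∂Qb :=
          lintegral_congr fun ω => M.Sbar_zero_eq i ω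
    _ = (∑ k, M.S0 i k)⁻¹ := by simp
  have hprob : ∀ i, IsProbabilityMeasure (Q i) := by
    intro i
    constructor
    rw [hQapp i Set.univ MeasurableSet.univ, setLIntegral_univ, hintSbT i,
      ENNReal.mul_inv_cancel (hc_ne0 i) (hc_top i)]
  have hae : (fun ω => ∑ i, M.Sbar i T ω) =ᵐ[Qb] fun _ => (1:ℝ≥0∞) := by
    have hle : ∀ ω, ∑ i, M.Sbar i T ω ≤ 1 := fun ω => exch_sum_inv_sum_le (M.exchange_S T hT ω)
    have hint : ∫⁻ ω, ∑ i, M.Sbar i T ω ∂Qb = 1 := by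
      rw [lintegral_finset_sum _ fun i _ => hmSbT i,
        Finset.sum_congr rfl fun (i : Fin d) _ => hintSbT i]
      exact exch_sum_inv_sum hs0 (hc_top ⟨0, hd⟩)
    refine ae_eq_of_ae_le_of_lintegral_le (ae_of_all _ hle) ?_ aemeasurable_const ?_
    · rw [hint]; exact ENNReal.one_ne_top
    · rw [hint]; simp
  have hpart2 : (∑ i, ((∑ j, M.S0 i j)⁻¹ • Q i)) = Qb := by
    refine MeasureTheory.Measure.ext fun s hs => ?_
    rw [Measure.finset_sum_apply]
    have h1 : ∀ i : Fin d, i ∈ Finset.univ →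
        ((∑ j, M.S0 i j)⁻¹ • Q i) s = ∫⁻ ω in s, M.Sbar i T ω ∂Qb := by
      intro i _
      rw [Measure.smul_apply, smul_eq_mul, hQapp i s hs, ← mul_assoc,
        ENNReal.inv_mul_cancel (hc_ne0 i) (hc_top i), one_mul]
    rw [Finset.sum_congr rfl h1, ← lintegral_finset_sum _ fun i _ => (hmSbT i),
      lintegral_congr_ae (ae_restrict_of_ae hae), setLIntegral_one]
  have hcons : ∀ i j : Fin d, ∀ t ∈ Set.Icc (0:ℝ) T, ∀ A : Set Ω, MeasurableSet[M.F t] A →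
      ∫⁻ ω in A, M.S t ω i j ∂(Q i) = M.S0 i j * Q j (A ∩ {ω | 0 < M.S t ω j i}) := by
    intro i j t ht A hA
    have hB : MeasurableSet[M.F t] {ω | 0 < M.S t ω j i} :=
      measurableSet_lt measurable_const (M.adapted_S t ht j i)
    have hAB : MeasurableSet[M.F t] (A ∩ {ω | 0 < M.S t ω j i}) := hA.inter hB
    have hmS : Measurable fun ω => M.S t ω i j := M.meas_S' ht i j
    have lhs1 : ∫⁻ ω in A, M.S t ω i j ∂(Q i)
        = ∫⁻ ω in A, (M.Sbar i T ω * (∑ k, M.S0 i k)) * M.S t ω i j ∂Qb := by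
      rw [hdens i]
      exact setLIntegral_withDensity_eq_setLIntegral_mul Qb ((hmSbT i).mul_const _) hmS
        (M.F.le t _ hA)
    have lhs2 : ∫⁻ ω in A, (M.Sbar i T ω * (∑ k, M.S0 i k)) * M.S t ω i j ∂Qb
        = (∑ k, M.S0 i k) * ∫⁻ ω in A, M.S t ω i j * M.Sbar i T ω ∂Qb := by
      rw [← lintegral_const_mul' _ _ (hc_top i)]
      exact lintegral_congr fun ω => by ring
    have lhs3 := key_setmul M Qb hQb i ht (M.adapted_S t ht i j) hA
    have hpt : ∀ ω, M.S t ω i j * M.Sbar i t ω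
        = ({ω | 0 < M.S t ω j i}).indicator (M.Sbar j t) ω := by
      intro ω
      have h := exch_pointwise (M.exchange_S t ht ω) i j
      by_cases hm : 0 < M.S t ω j i
      · rw [Set.indicator_of_mem (show ω ∈ {ω | 0 < M.S t ω j i} from hm)]
        simpa [MarketModel.Sbar, hm] using h
      · rw [Set.indicator_of_notMem (show ω ∉ {ω | 0 < M.S t ω j i} from hm)]
        simpa [MarketModel.Sbar, hm] using h
    have lhs4 : ∫⁻ ω in A, M.S t ω i j * M.Sbar i t ω ∂Qb
        = ∫⁻ ω in A ∩ {ω | 0 < M.S t ω j i}, M.Sbar j t ω ∂Qb := by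
      rw [lintegral_congr fun ω => hpt ω, lintegral_indicator (M.F.le t _ hB),
        Measure.restrict_restrict (M.F.le t _ hB), Set.inter_comm]
    have rhs1 : Q j (A ∩ {ω | 0 < M.S t ω j i})
        = (∑ k, M.S0 j k) * ∫⁻ ω in A ∩ {ω | 0 < M.S t ω j i}, M.Sbar j T ω ∂Qb :=
      hQapp j _ (M.F.le t _ hAB)
    have hcc : (∑ k, M.S0 i k) = M.S0 i j * (∑ k, M.S0 j k) :=
      exch_row_sum hs0 (hS0_ne0 i j) (hS0_top i j)
    rw [lhs1, lhs2, lhs3, lhs4, ← key_setL M Qb hQb j ht hAB, rhs1, ← mul_assoc, ← hcc]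
  refine ⟨⟨hprob, hcons⟩, hpart2, ?_, ?_⟩
  · refine Measure.AbsolutelyContinuous.mk fun s hs h0 => ?_
    rw [Measure.finset_sum_apply]
    refine Finset.sum_eq_zero fun i _ => ?_
    rw [hQapp i s hs, setLIntegral_measure_zero s _ h0, mul_zero]
  · refine Measure.AbsolutelyContinuous.mk fun s hs h0 => ?_
    rw [Measure.finset_sum_apply] at h0
    have hz : ∀ i : Fin d, Q i s = 0 := fun i =>
      (Finset.sum_eq_zero_iff.1 h0) i (Finset.mem_univ i)
    rw [← hpart2, Measure.finset_sum_apply]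
    refine Finset.sum_eq_zero fun i _ => ?_
    rw [Measure.smul_apply, smul_eq_mul, hz i, mul_zero]
end
end
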